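/- arXiv:1910.04600 — 2 statements merged into one kernel-verified Lean document; each statement's English description precedes it below -/
import Mathlib

section
/- Let n ∈ ℕ and let S be a multiset over {0, 1, …, n} (representing exponents of powers of two) such that every i < n occurs in S with multiplicity at most 1. If the value ∑_{i ∈ S} 2^i is at most W · (2^n − 1) for some W ∈ ℕ, then the cardinality of S is at most W + n. -/
theorem clean_card_bound (n W : ℕ) (S : Multiset ℕ)
    (hle : ∀ i ∈ S, i ≤ n)
    (hcount : ∀ i, i < n → S.count i ≤ 1)
    (hval : (S.map (fun i => 2 ^ i)).sum ≤ W * (2 ^ n - 1)) :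
    Multiset.card S ≤ W + n := by
  classical
  set T := S.filter (fun i => ¬ i = n) with hT
  have hsplit : S.filter (fun i => i = n) + T = S := Multiset.filter_add_not _ _
  have hfe : S.filter (fun i => i = n) = Multiset.replicate (S.count n) n := by
    exact Multiset.filter_eq' S n
  -- bound on count n
  have hsum : S.count n * 2 ^ n ≤ (S.map (fun i => 2 ^ i)).sum := by
    calc S.count n * 2 ^ n
        = ((Multiset.replicate (S.count n) n).map (fun i => 2 ^ i)).sum := by
          simp [Multiset.map_replicate, Multiset.sum_replicate, Nat.smul_one_eq_cast]
      _ ≤ (S.map (fun i => 2 ^ i)).sum := by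
          conv_rhs => rw [← hsplit]
          rw [Multiset.map_add, Multiset.sum_add, hfe]
          exact Nat.le_add_right _ _
  have hcn : S.count n ≤ W := by
    have h1 : S.count n * 2 ^ n ≤ W * 2 ^ n := by
      calc S.count n * 2 ^ n ≤ W * (2 ^ n - 1) := le_trans hsum hval
        _ ≤ W * 2 ^ n := Nat.mul_le_mul_left _ (Nat.sub_le _ _)
    exact Nat.le_of_mul_le_mul_right h1 (Nat.pow_pos (by norm_num))
  -- bound on card T
  have hTnodup : T.Nodup := by
    rw [Multiset.nodup_iff_count_le_one]
    intro i
    by_cases hi : i ∈ T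
    · have hin : i ∈ S := Multiset.mem_of_mem_filter hi
      have hne : ¬ i = n := (Multiset.mem_filter.mp hi).2
      have : i < n := lt_of_le_of_ne (hle i hin) hne
      exact le_trans (Multiset.count_le_of_le i (Multiset.filter_le _ _)) (hcount i this)
    · simp [Multiset.count_eq_zero_of_notMem hi]
  have hTcard : Multiset.card T ≤ n := by
    have hsub : T.toFinset ⊆ Finset.range n := by
      intro i hi
      rw [Multiset.mem_toFinset] at hi
      have hin : i ∈ S := Multiset.mem_of_mem_filter hi
      have hne : ¬ i = n := (Multiset.mem_filter.mp hi).2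
      exact Finset.mem_range.mpr (lt_of_le_of_ne (hle i hin) hne)
    calc Multiset.card T = T.toFinset.card := (Multiset.toFinset_card_eq_card_iff_nodup.mpr hTnodup).symm
      _ ≤ (Finset.range n).card := Finset.card_le_card hsub
      _ = n := Finset.card_range n
  calc Multiset.card S = Multiset.card (S.filter (fun i => i = n)) + Multiset.card T := by
        conv_lhs => rw [← hsplit, Multiset.card_add]
    _ = S.count n + Multiset.card T := by rw [hfe]; simp
    _ ≤ W + n := Nat.add_le_add hcn hTcard
end

section
/- Consider the following process on a population of N ≥ 1 agents, each holding a number in {1, …, ℓ}, all initially holding 1: a step picks two agents holding the same value i < ℓ and increments one of them to i+1. Then in any maximal sequence of steps (i.e., from any terminal configuration), for every j ∈ {1, …, min(N, ℓ)} at least one agent holds value j, and if N < ℓ then every agent holds a distinct value and no agent holds a value greater than N. -/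
def countStep (ℓ : ℕ) (M M' : Multiset ℕ) : Prop :=
  ∃ i, 1 ≤ i ∧ i < ℓ ∧ 2 ≤ M.count i ∧ M' = M.erase i + {i + 1}

def CountInv (N ℓ : ℕ) (M : Multiset ℕ) : Prop :=
  Multiset.card M = N ∧ (∀ x ∈ M, 1 ≤ x ∧ x ≤ ℓ) ∧
    (∀ j, 1 ≤ j → (∃ i ∈ M, j < i) → j ∈ M)

lemma countInv_step {N ℓ : ℕ} {M M' : Multiset ℕ} (h : CountInv N ℓ M)
    (hs : countStep ℓ M M') : CountInv N ℓ M' := by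
  obtain ⟨hcard, hbd, hpre⟩ := h
  obtain ⟨i, hi1, hiℓ, hct, rfl⟩ := hs
  have hiM : i ∈ M := by rw [← Multiset.count_pos]; omega
  have hc1 : 1 ≤ Multiset.card M := by
    have := Multiset.count_le_card i M
    omega
  refine ⟨?_, ?_, ?_⟩
  · rw [Multiset.card_add, Multiset.card_erase_of_mem hiM]
    simp only [Multiset.card_singleton, Nat.pred_eq_sub_one]
    omega
  · intro x hx
    rcases Multiset.mem_add.mp hx with hx | hx
    · exact hbd x (Multiset.mem_of_mem_erase hx)
    · rw [Multiset.mem_singleton] at hx; subst hx; omega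
  · rintro j hj ⟨i', hi'M, hji'⟩
    have hjM : j ∈ M := by
      rcases Multiset.mem_add.mp hi'M with h' | h'
      · exact hpre j hj ⟨i', Multiset.mem_of_mem_erase h', hji'⟩
      · rw [Multiset.mem_singleton] at h'; subst h'
        rcases Nat.lt_or_ge j i with hji | hji
        · exact hpre j hj ⟨i, hiM, hji⟩
        · have : j = i := by omega
          subst this; exact hiM
    rw [Multiset.mem_add]
    left
    by_cases hji : j = i
    · subst hji
      rw [← Multiset.count_pos, Multiset.count_erase_self]; omega
    · rw [← Multiset.count_pos, Multiset.count_erase_of_ne hji, Multiset.count_pos]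
      exact hjM

theorem counting_phase (N ℓ : ℕ) (hN : 1 ≤ N) (M : Multiset ℕ)
    (hreach : Relation.ReflTransGen (countStep ℓ) (Multiset.replicate N 1) M)
    (hterm : ∀ M', ¬ countStep ℓ M M') :
    (∀ j, 1 ≤ j → j ≤ min N ℓ → j ∈ M) ∧
      (N < ℓ → (∀ j, M.count j ≤ 1) ∧ ∀ j ∈ M, j ≤ N) := by
  rcases Nat.eq_zero_or_pos ℓ with rfl | hℓ
  · exact ⟨fun j hj hj2 => by omega, fun h => by omega⟩
  have hInv : CountInv N ℓ M := by
    clear hterm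
    induction hreach with
    | refl =>
      refine ⟨Multiset.card_replicate _ _, ?_, ?_⟩
      · intro x hx
        rw [Multiset.eq_of_mem_replicate hx]
        omega
      · rintro j hj ⟨i, hiM, hji⟩
        rw [Multiset.eq_of_mem_replicate hiM] at hji
        omega
    | tail _ hstep ih => exact countInv_step ih hstep
  obtain ⟨hcard, hbd, hpre⟩ := hInv
  have hne : M.toFinset.Nonempty := by
    rw [Multiset.toFinset_nonempty]
    intro h
    rw [h] at hcard
    simp at hcard
    omega
  set m := M.toFinset.max' hne with hm
  have hmM : m ∈ M := Multiset.mem_toFinset.mp (M.toFinset.max'_mem hne)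
  have hmax : ∀ x ∈ M, x ≤ m := fun x hx =>
    M.toFinset.le_max' x (Multiset.mem_toFinset.mpr hx)
  have hm1 : 1 ≤ m := (hbd m hmM).1
  have hmℓ : m ≤ ℓ := (hbd m hmM).2
  have hcnt : ∀ i, 1 ≤ i → i < ℓ → M.count i ≤ 1 := by
    intro i h1 h2
    by_contra h
    exact hterm (M.erase i + {i + 1}) ⟨i, h1, h2, by omega, rfl⟩
  have hmem : ∀ j, 1 ≤ j → j ≤ m → j ∈ M := by
    intro j h1 h2
    rcases eq_or_lt_of_le h2 with rfl | h
    · exact hmM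
    · exact hpre j h1 ⟨m, hmM, h⟩
  have hsub : Finset.Icc 1 m ⊆ M.toFinset := by
    intro j hj
    rw [Finset.mem_Icc] at hj
    exact Multiset.mem_toFinset.mpr (hmem j hj.1 hj.2)
  have hsub2 : M.toFinset ⊆ Finset.Icc 1 m := by
    intro j hj
    have hjM := Multiset.mem_toFinset.mp hj
    rw [Finset.mem_Icc]
    exact ⟨(hbd j hjM).1, hmax j hjM⟩
  have htf : M.toFinset = Finset.Icc 1 m := Finset.Subset.antisymm hsub2 hsub
  have hNm : m < ℓ → N = m := by
    intro hlt
    have hsum : ∑ a ∈ M.toFinset, M.count a = Multiset.card M :=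
      Multiset.toFinset_sum_count_eq M
    rw [htf] at hsum
    have hone : ∀ a ∈ Finset.Icc 1 m, M.count a = 1 := by
      intro a ha
      rw [Finset.mem_Icc] at ha
      have h1 := hcnt a ha.1 (by omega)
      have h2 : 0 < M.count a := Multiset.count_pos.mpr (hmem a ha.1 ha.2)
      omega
    rw [Finset.sum_congr rfl hone, Finset.sum_const, smul_eq_mul, mul_one,
      Nat.card_Icc] at hsum
    omega
  have hℓN : m = ℓ → ℓ ≤ N := by
    intro he
    have h1 := Finset.card_le_card hsub
    have h2 := Multiset.toFinset_card_le M
    rw [Nat.card_Icc] at h1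
    omega
  constructor
  · intro j hj1 hj2
    apply hmem j hj1
    rcases eq_or_lt_of_le hmℓ with he | hlt
    · omega
    · have := hNm hlt
      omega
  · intro hNℓ
    have hmlt : m < ℓ := by
      rcases eq_or_lt_of_le hmℓ with he | hlt
      · have := hℓN he; omega
      · exact hlt
    have hNm' := hNm hmlt
    constructor
    · intro j
      by_cases hjM : j ∈ M
      · have h1 := (hbd j hjM).1
        have h2 := hmax j hjM
        exact hcnt j h1 (by omega)
      · rw [Multiset.count_eq_zero_of_notMem hjM]
        omega
    · intro j hjM
      have := hmax j hjM
      omega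
end
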